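/- Let u : [x,y] → ℝ be continuous, piecewise C², with u ≥ u₀ > 1 on [x,y], satisfying u'' = -u on regular points, u'(y) = 0, u increasing on [x,y] with local minimum at x and maximum at y (u(x) ≤ u(s) ≤ u(y)), and suppose the jumps of u' at singular points are nonnegative. Then for all s ∈ [x,y], u(s) ≥ u(y)·cos(y - s), provided y - x < π/2. -/

import Mathlib

open Set Filter Topology

/-- Let `u` be continuous and piecewise `C²` on `[x,y]` (singular set `S ⊆ (x,y)` finite),
with `u ≥ u₀ > 1`, `u'' = -u` at regular points, `u'(y) = 0`, `u` monotone on `[x,y]`,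
nonnegative jumps of `u'` at the singular points, and `y - x < π/2`.  Then
`u(s) ≥ u(y)·cos(y - s)` for all `s ∈ [x,y]`. -/
theorem stmt_6 (u v : ℝ → ℝ) (x y u₀ : ℝ) (S : Finset ℝ)
    (hxy : x < y) (hwidth : y - x < Real.pi / 2)
    (hS : (S : Set ℝ) ⊆ Set.Ioo x y)
    (hcont : ContinuousOn u (Set.Icc x y))
    (hu₀ : 1 < u₀) (hlb : ∀ s ∈ Set.Icc x y, u₀ ≤ u s)
    (hmono : MonotoneOn u (Set.Icc x y))
    (hderiv : ∀ s ∈ Set.Icc x y \ (S : Set ℝ), HasDerivWithinAt u (v s) (Set.Icc x y) s)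
    (hode : ∀ s ∈ Set.Icc x y \ (S : Set ℝ), HasDerivWithinAt v (-u s) (Set.Icc x y) s)
    (hvy : v y = 0)
    (hjump : ∀ s ∈ S, ∃ vl vr : ℝ,
      Tendsto v (nhdsWithin s (Set.Iio s)) (nhds vl) ∧
      Tendsto v (nhdsWithin s (Set.Ioi s)) (nhds vr) ∧ vl ≤ vr) :
    ∀ s ∈ Set.Icc x y, u y * Real.cos (y - s) ≤ u s := by
  have hcos_pos : ∀ s ∈ Icc x y, 0 < Real.cos (y - s) := by
    intro s hs
    apply Real.cos_pos_of_mem_Ioo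
    constructor <;> [skip; skip] <;> linarith [Real.pi_pos, hs.1, hs.2]
  have hcosne : ∀ t ∈ Icc x y, Real.cos (y - t) ≠ 0 := fun t ht => ne_of_gt (hcos_pos t ht)
  -- derivative of cos (y - ·) and sin (y - ·)
  have hgc : ∀ t : ℝ, HasDerivAt (fun s => Real.cos (y - s)) (Real.sin (y - t)) t := by
    intro t
    have h1 : HasDerivAt (fun s : ℝ => y - s) (-1) t := (hasDerivAt_id t).const_sub y
    have h2 := (Real.hasDerivAt_cos (y - t)).comp t h1
    exact h2.congr_deriv (by ring)
  have hgs : ∀ t : ℝ, HasDerivAt (fun s => Real.sin (y - s)) (-Real.cos (y - t)) t := by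
    intro t
    have h1 : HasDerivAt (fun s : ℝ => y - s) (-1) t := (hasDerivAt_id t).const_sub y
    have h2 := (Real.hasDerivAt_sin (y - t)).comp t h1
    exact h2.congr_deriv (by ring)
  set W : ℝ → ℝ := fun s => v s * Real.cos (y - s) - u s * Real.sin (y - s) with hWdef
  have hWderiv : ∀ t ∈ Icc x y \ (S : Set ℝ), HasDerivWithinAt W 0 (Icc x y) t := by
    intro t ht
    have h1 := hderiv t ht
    have h2 := hode t ht
    have h3 := (h2.mul (hgc t).hasDerivWithinAt).sub (h1.mul (hgs t).hasDerivWithinAt)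
    exact h3.congr_deriv (by ring)
  have hWy : W y = 0 := by
    simp only [hWdef, sub_self, Real.cos_zero, Real.sin_zero, hvy]
    ring
  -- W is constant on singular-free closed subintervals
  have hconst : ∀ a b : ℝ, a ∈ Icc x y → b ∈ Icc x y → a ≤ b →
      (∀ t ∈ Icc a b, t ∉ S) → W b = W a := by
    intro a b ha hb hab hfree
    have hsub : Icc a b ⊆ Icc x y := Icc_subset_Icc ha.1 hb.2
    have hd : ∀ t ∈ Icc a b, HasDerivWithinAt W 0 (Icc a b) t := fun t ht =>
      (hWderiv t ⟨hsub ht, hfree t ht⟩).mono hsub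
    have hcW : ContinuousOn W (Icc a b) := fun t ht => (hd t ht).continuousWithinAt
    exact constant_of_has_deriv_right_zero hcW
      (fun t ht => (hd t (Ico_subset_Icc_self ht)).mono_of_mem_nhdsWithin
        (Icc_mem_nhdsGE_of_mem ht)) b (right_mem_Icc.mpr hab)
  -- one-sided limits of u
  have hulim_l : ∀ p ∈ Ioo x y, Tendsto u (𝓝[<] p) (𝓝 (u p)) := by
    intro p hp
    have h1 : ContinuousWithinAt u (Ioo x p) p :=
      (hcont p ⟨hp.1.le, hp.2.le⟩).mono (fun t ht => ⟨ht.1.le, ht.2.le.trans hp.2.le⟩)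
    rw [ContinuousWithinAt, nhdsWithin_Ioo_eq_nhdsLT hp.1] at h1
    exact h1
  have hulim_r : ∀ p ∈ Ioo x y, Tendsto u (𝓝[>] p) (𝓝 (u p)) := by
    intro p hp
    have h1 : ContinuousWithinAt u (Ioo p y) p :=
      (hcont p ⟨hp.1.le, hp.2.le⟩).mono (fun t ht => ⟨hp.1.le.trans ht.1.le, ht.2.le⟩)
    rw [ContinuousWithinAt, nhdsWithin_Ioo_eq_nhdsGT hp.2] at h1
    exact h1
  have hcoslim : ∀ (l : Filter ℝ) (p : ℝ), l ≤ 𝓝 p →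
      Tendsto (fun s => Real.cos (y - s)) l (𝓝 (Real.cos (y - p))) := fun l p hl =>
    ((Real.continuous_cos.comp (continuous_const.sub continuous_id)).tendsto p).mono_left hl
  have hsinlim : ∀ (l : Filter ℝ) (p : ℝ), l ≤ 𝓝 p →
      Tendsto (fun s => Real.sin (y - s)) l (𝓝 (Real.sin (y - p))) := fun l p hl =>
    ((Real.continuous_sin.comp (continuous_const.sub continuous_id)).tendsto p).mono_left hl
  -- Main claim: W ≤ 0 at regular points
  have key : ∀ n : ℕ, ∀ s, s ∈ Icc x y → s ∉ S →
      (S.filter (fun q => s < q)).card = n → W s ≤ 0 := by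
    intro n
    induction n using Nat.strong_induction_on with
    | _ n ih =>
      intro s hs hsS hcard
      rcases Finset.eq_empty_or_nonempty (S.filter (fun q => s < q)) with hemp | hne
      · have hfree : ∀ t ∈ Icc s y, t ∉ S := by
          intro t ht htS
          rcases eq_or_lt_of_le ht.1 with h | h
          · exact hsS (h ▸ htS)
          · exact Finset.eq_empty_iff_forall_notMem.mp hemp t
              (Finset.mem_filter.mpr ⟨htS, h⟩)
        have h1 := hconst s y hs (right_mem_Icc.mpr hxy.le) hs.2 hfree
        rw [hWy] at h1
        exact h1.symm.le
      · set p := (S.filter (fun q => s < q)).min' hne with hpdef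
        have hpmem : p ∈ S.filter (fun q => s < q) := (S.filter _).min'_mem hne
        have hpS : p ∈ S := (Finset.mem_filter.mp hpmem).1
        have hsp : s < p := (Finset.mem_filter.mp hpmem).2
        have hpIoo : p ∈ Ioo x y := hS hpS
        obtain ⟨vl, vr, hvl, hvr, hlr⟩ := hjump p hpS
        -- no singular points in (s, p)
        have hnoS : ∀ q ∈ S, ¬(s < q ∧ q < p) := by
          rintro q hq ⟨h1, h2⟩
          exact absurd ((S.filter _).min'_le q (Finset.mem_filter.mpr ⟨hq, h1⟩))
            (not_le.mpr h2)
        have hWconstl : ∀ t ∈ Ico s p, W t = W s := by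
          intro t ht
          apply hconst s t hs ⟨hs.1.trans ht.1, ht.2.le.trans hpIoo.2.le⟩ ht.1
          intro q hq hqS
          rcases eq_or_lt_of_le hq.1 with h | h
          · exact hsS (h ▸ hqS)
          · exact hnoS q hqS ⟨h, lt_of_le_of_lt hq.2 ht.2⟩
        have hWleft : Tendsto W (𝓝[<] p) (𝓝 (W s)) := by
          have he : (fun _ : ℝ => W s) =ᶠ[𝓝[<] p] W := by
            filter_upwards [Ioo_mem_nhdsLT_of_mem (⟨hsp, le_refl p⟩ : p ∈ Ioc s p)] with t ht
            exact (hWconstl t ⟨ht.1.le, ht.2⟩).symm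
          exact Tendsto.congr' he tendsto_const_nhds
        have hWleft2 : Tendsto W (𝓝[<] p)
            (𝓝 (vl * Real.cos (y - p) - u p * Real.sin (y - p))) :=
          (hvl.mul (hcoslim _ p nhdsWithin_le_nhds)).sub
            ((hulim_l p hpIoo).mul (hsinlim _ p nhdsWithin_le_nhds))
        have hWs_eq : W s = vl * Real.cos (y - p) - u p * Real.sin (y - p) :=
          tendsto_nhds_unique hWleft hWleft2
        -- a singular-free interval to the right of p
        obtain ⟨δ, hpδ, hδy, hδfree⟩ : ∃ δ, p < δ ∧ δ ≤ y ∧ ∀ q ∈ S, ¬(p < q ∧ q < δ) := by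
          rcases Finset.eq_empty_or_nonempty (S.filter (fun q => p < q)) with h2 | h2
          · exact ⟨y, hpIoo.2, le_refl y, fun q hq hh =>
              Finset.eq_empty_iff_forall_notMem.mp h2 q (Finset.mem_filter.mpr ⟨hq, hh.1⟩)⟩
          · refine ⟨min ((S.filter (fun q => p < q)).min' h2) y, ?_, min_le_right _ _, ?_⟩
            · exact lt_min (Finset.mem_filter.mp ((S.filter _).min'_mem h2)).2 hpIoo.2
            · rintro q hq ⟨h1, h3⟩
              have h4 := (S.filter (fun q => p < q)).min'_le q (Finset.mem_filter.mpr ⟨hq, h1⟩)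
              have h5 := min_le_left ((S.filter (fun q => p < q)).min' h2) y
              linarith
        have hWneg_right : ∀ t ∈ Ioo p δ, W t ≤ 0 := by
          intro t ht
          have htIcc : t ∈ Icc x y := ⟨(hpIoo.1.trans ht.1).le, ht.2.le.trans hδy⟩
          have htS : t ∉ S := fun h => hδfree t h ⟨ht.1, ht.2⟩
          have hsub2 : S.filter (fun q => t < q) ⊆ (S.filter (fun q => s < q)).erase p := by
            intro q hq
            obtain ⟨hqS, hqt⟩ := Finset.mem_filter.mp hq
            exact Finset.mem_erase.mpr ⟨ne_of_gt (ht.1.trans hqt),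
              Finset.mem_filter.mpr ⟨hqS, (hsp.trans ht.1).trans hqt⟩⟩
          have h1 := Finset.card_le_card hsub2
          rw [Finset.card_erase_of_mem hpmem, hcard] at h1
          have h2 : 0 < n := hcard ▸ Finset.card_pos.mpr hne
          exact ih _ (by omega) t htIcc htS rfl
        have hWright : Tendsto W (𝓝[>] p)
            (𝓝 (vr * Real.cos (y - p) - u p * Real.sin (y - p))) :=
          (hvr.mul (hcoslim _ p nhdsWithin_le_nhds)).sub
            ((hulim_r p hpIoo).mul (hsinlim _ p nhdsWithin_le_nhds))
        have hWr_le : vr * Real.cos (y - p) - u p * Real.sin (y - p) ≤ 0 := by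
          apply le_of_tendsto hWright
          filter_upwards [Ioo_mem_nhdsGT_of_mem (⟨le_refl p, hpδ⟩ : p ∈ Ico p δ)] with t ht
          exact hWneg_right t ht
        have hcosp : 0 < Real.cos (y - p) := hcos_pos p ⟨hpIoo.1.le, hpIoo.2.le⟩
        rw [hWs_eq]
        nlinarith [mul_le_mul_of_nonneg_right hlr hcosp.le]
  have key' : ∀ t ∈ Icc x y \ (S : Set ℝ), W t ≤ 0 := fun t ht => key _ t ht.1 ht.2 rfl
  -- the function φ = u / cos (y - ·) is antitone on singular-free intervals
  set φ : ℝ → ℝ := fun s => u s / Real.cos (y - s) with hφdef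
  have hφcont : ContinuousOn φ (Icc x y) :=
    hcont.div ((Real.continuous_cos.comp (continuous_const.sub continuous_id)).continuousOn)
      hcosne
  have hφderiv : ∀ t, t ∈ Ioo x y → t ∉ S →
      HasDerivAt φ ((v t * Real.cos (y - t) - u t * Real.sin (y - t)) / Real.cos (y - t) ^ 2)
        t := by
    intro t ht htS
    have hmem : Icc x y ∈ 𝓝 t := Icc_mem_nhds ht.1 ht.2
    have hu' : HasDerivAt u (v t) t :=
      (hderiv t ⟨Ioo_subset_Icc_self ht, htS⟩).hasDerivAt hmem
    exact hu'.div (hgc t) (hcosne t (Ioo_subset_Icc_self ht))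
  have hanti : ∀ a b : ℝ, a ∈ Icc x y → b ∈ Icc x y → a ≤ b →
      (∀ t ∈ Ioo a b, t ∉ S) → φ b ≤ φ a := by
    intro a b ha hb hab hfree
    rcases eq_or_lt_of_le hab with rfl | hlt
    · exact le_refl _
    have hsub : Icc a b ⊆ Icc x y := Icc_subset_Icc ha.1 hb.2
    have hIoo : Ioo a b ⊆ Ioo x y := Ioo_subset_Ioo ha.1 hb.2
    have H : AntitoneOn φ (Icc a b) := by
      apply antitoneOn_of_deriv_nonpos (convex_Icc a b) (hφcont.mono hsub)
      · rw [interior_Icc]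
        intro t ht
        exact (hφderiv t (hIoo ht) (hfree t ht)).differentiableAt.differentiableWithinAt
      · rw [interior_Icc]
        intro t ht
        rw [(hφderiv t (hIoo ht) (hfree t ht)).deriv]
        apply div_nonpos_of_nonpos_of_nonneg
        · exact key' t ⟨hsub (Ioo_subset_Icc_self ht), hfree t ht⟩
        · exact sq_nonneg _
    exact H (left_mem_Icc.mpr hab) (right_mem_Icc.mpr hab) hab
  -- induction: φ y ≤ φ s
  have key2 : ∀ n : ℕ, ∀ s ∈ Icc x y, (S.filter (fun q => s < q)).card = n → φ y ≤ φ s := by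
    intro n
    induction n using Nat.strong_induction_on with
    | _ n ih =>
      intro s hs hcard
      rcases Finset.eq_empty_or_nonempty (S.filter (fun q => s < q)) with hemp | hne
      · apply hanti s y hs (right_mem_Icc.mpr hxy.le) hs.2
        intro t ht htS
        exact Finset.eq_empty_iff_forall_notMem.mp hemp t (Finset.mem_filter.mpr ⟨htS, ht.1⟩)
      · set p := (S.filter (fun q => s < q)).min' hne with hpdef
        have hpmem : p ∈ S.filter (fun q => s < q) := (S.filter _).min'_mem hne
        have hpS : p ∈ S := (Finset.mem_filter.mp hpmem).1
        have hsp : s < p := (Finset.mem_filter.mp hpmem).2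
        have hpIoo : p ∈ Ioo x y := hS hpS
        have h1 : φ p ≤ φ s := by
          apply hanti s p hs ⟨hpIoo.1.le, hpIoo.2.le⟩ hsp.le
          intro t ht htS
          exact absurd ((S.filter _).min'_le t (Finset.mem_filter.mpr ⟨htS, ht.1⟩))
            (not_le.mpr ht.2)
        have hsub2 : S.filter (fun q => p < q) ⊆ (S.filter (fun q => s < q)).erase p := by
          intro q hq
          obtain ⟨hqS, hqp⟩ := Finset.mem_filter.mp hq
          exact Finset.mem_erase.mpr ⟨ne_of_gt hqp, Finset.mem_filter.mpr ⟨hqS, hsp.trans hqp⟩⟩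
        have h3 := Finset.card_le_card hsub2
        rw [Finset.card_erase_of_mem hpmem, hcard] at h3
        have h4 : 0 < n := hcard ▸ Finset.card_pos.mpr hne
        have h2 : φ y ≤ φ p :=
          ih _ (by omega) p ⟨hpIoo.1.le, hpIoo.2.le⟩ rfl
        exact h2.trans h1
  intro s hs
  have h1 := key2 _ s hs rfl
  have h2 : φ y = u y := by
    simp only [hφdef, sub_self, Real.cos_zero, div_one]
  rw [h2, hφdef] at h1
  have h3 : 0 < Real.cos (y - s) := hcos_pos s hs
  exact (le_div_iff₀ h3).mp h1
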